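/- In any finite acyclic weighted digraph with chosen initial vertices A_1,…,A_n and final vertices B_1,…,B_n, the determinant of the path matrix M (M_{jk} = sum of weights of directed paths from A_j to B_k) equals the sum over vertex-disjoint path systems P of sgn(P)·w(P) (Gessel–Viennot–Lindström). -/

import Mathlib

/-- A directed path from `s` to `t` in the digraph on the finite vertex set `V`
with edge relation `E`: a finite sequence of vertices starting at `s`, ending at
`t`, each consecutive pair joined by an edge.  In an acyclic digraph every
directed path visits pairwise distinct vertices, so its length is at most
`Fintype.card V`, which is the bound imposed here. -/
def DiPath (V : Type*) [Fintype V] (E : V → V → Prop) (s t : V) :=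
  {p : Σ l : Fin (Fintype.card V + 1), Fin (l.1 + 1) → V //
    p.2 0 = s ∧ p.2 (Fin.last p.1.1) = t ∧
      ∀ k : Fin p.1.1, E (p.2 k.castSucc) (p.2 k.succ)}

instance (V : Type*) [Fintype V] [DecidableEq V] (E : V → V → Prop)
    [DecidableRel E] (s t : V) : Fintype (DiPath V E s t) :=
  Subtype.fintype _

open Finset in
/-- The weight of a directed path: the product of the weights of its edges. -/
def DiPath.weight {V : Type*} [Fintype V] {E : V → V → Prop} {s t : V}
    {R : Type*} [CommRing R] (w : V → V → R) (p : DiPath V E s t) : R :=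
  ∏ k : Fin p.1.1.1, w (p.1.2 k.castSucc) (p.1.2 k.succ)

/-- A vertex-disjoint path system from the initial vertices `A 0, …, A (n-1)` to
the final vertices `B 0, …, B (n-1)`: a permutation `σ` together with directed
paths `P j : A j → B (σ j)`, no two of which share a vertex. -/
def VDPathSystem (V : Type*) [Fintype V] (E : V → V → Prop) {n : ℕ}
    (A B : Fin n → V) :=
  {q : Σ σ : Equiv.Perm (Fin n), ∀ j, DiPath V E (A j) (B (σ j)) //
    ∀ j j' : Fin n, j ≠ j' → ∀ u v, (q.2 j).1.2 u ≠ (q.2 j').1.2 v}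

instance (V : Type*) [Fintype V] [DecidableEq V] (E : V → V → Prop)
    [DecidableRel E] {n : ℕ} (A B : Fin n → V) :
    Fintype (VDPathSystem V E A B) :=
  Subtype.fintype _


namespace GVAux

set_option linter.unusedSectionVars false

open Finset List

variable {V : Type*} [Fintype V] [DecidableEq V] {E : V → V → Prop} [DecidableRel E]

/-! ### Basic DiPath API -/

variable {s t : V}

def toL (p : DiPath V E s t) : List V := List.ofFn p.1.2

lemma toL_length (p : DiPath V E s t) : (toL p).length = p.1.1.1 + 1 := by
  simp [toL]

lemma toL_ne_nil (p : DiPath V E s t) : toL p ≠ [] := by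
  intro h
  have := toL_length p
  rw [h] at this
  simp at this

lemma toL_getElem (p : DiPath V E s t) (i : ℕ) (h : i < (toL p).length) :
    (toL p)[i] = p.1.2 ⟨i, by have := toL_length p; omega⟩ := by
  simp only [toL] at h ⊢
  rw [List.getElem_ofFn]

lemma head_toL (p : DiPath V E s t) : (toL p).head (toL_ne_nil p) = s := by
  rw [List.head_eq_getElem, toL_getElem]
  have h0 := p.2.1
  convert h0
  simp

lemma getLast_toL (p : DiPath V E s t) : (toL p).getLast (toL_ne_nil p) = t := by
  rw [List.getLast_eq_getElem, toL_getElem]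
  have := p.2.2.1
  convert this
  simp [toL_length, Fin.last]

lemma chain'_toL (p : DiPath V E s t) : (toL p).Chain' E := by
  show List.IsChain E (toL p)
  rw [List.isChain_iff_getElem]
  intro i hi
  rw [toL_getElem, toL_getElem]
  have hlen := toL_length p
  have hi' : i < p.1.1.1 := by omega
  have := p.2.2.2 ⟨i, hi'⟩
  convert this using 2 <;> rfl

lemma mem_toL (p : DiPath V E s t) (x : V) : x ∈ toL p ↔ ∃ u, p.1.2 u = x := by
  rw [toL, List.mem_ofFn]

/-- Extensionality: a `DiPath` is determined by its list of vertices. -/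
lemma toL_injective : Function.Injective (toL (V := V) (E := E) (s := s) (t := t)) := by
  rintro ⟨⟨⟨l, hl⟩, f⟩, hp⟩ ⟨⟨⟨l', hl'⟩, f'⟩, hp'⟩ h
  simp only [toL] at h
  have hlen : l = l' := by
    have := congrArg List.length h
    simpa using this
  subst hlen
  have hf : f = f' := List.ofFn_injective h
  subst hf
  rfl

/-- Construct a `DiPath` from a list. -/
def ofL (l : List V) (hne : l ≠ []) (hlen : l.length ≤ Fintype.card V + 1)
    (hs : l.head hne = s) (ht : l.getLast hne = t) (hc : l.Chain' E) :
    DiPath V E s t :=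
  ⟨⟨⟨l.length - 1, by
      have : 0 < l.length := List.length_pos_iff.2 hne
      omega⟩, fun i => l[(i : ℕ)]'(by
      have h1 : 0 < l.length := List.length_pos_iff.2 hne
      have h2 := i.2
      simp only at h2
      omega)⟩, by
    have hpos : 0 < l.length := List.length_pos_iff.2 hne
    refine ⟨?_, ?_, ?_⟩
    · rw [← hs, List.head_eq_getElem]; simp
    · rw [← ht, List.getLast_eq_getElem]; simp [Fin.last]
    · intro k
      have hk : (k : ℕ) < l.length - 1 := k.2
      have := List.isChain_iff_getElem.1 hc k.1 (by omega)
      convert this using 2 <;> simp⟩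

lemma toL_ofL (l : List V) (hne : l ≠ []) (hlen : l.length ≤ Fintype.card V + 1)
    (hs : l.head hne = s) (ht : l.getLast hne = t) (hc : l.Chain' E) :
    toL (ofL l hne hlen hs ht hc : DiPath V E s t) = l := by
  have hpos : 0 < l.length := List.length_pos_iff.2 hne
  simp only [toL, ofL]
  apply List.ext_getElem
  · simp; omega
  · intro i h1 h2
    rw [List.getElem_ofFn]

/-- A cast of a `DiPath` along endpoint equalities, preserving the underlying data. -/
def pcast {s s' t t' : V} (hs : s = s') (ht : t = t') (p : DiPath V E s t) :
    DiPath V E s' t' :=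
  ⟨p.1, by rw [← hs, ← ht]; exact p.2⟩

@[simp] lemma toL_pcast {s s' t t' : V} (hs : s = s') (ht : t = t') (p : DiPath V E s t) :
    toL (pcast hs ht p) = toL p := rfl

end GVAux

namespace GVAux

set_option linter.unusedSectionVars false

open Finset List

variable {V : Type*} [Fintype V] [DecidableEq V] {E : V → V → Prop} [DecidableRel E]
variable {R : Type*} [CommRing R]

/-! ### Weights of lists -/

def lw (w : V → V → R) : List V → R
  | [] => 1
  | [_] => 1
  | a :: b :: l => w a b * lw w (b :: l)

@[simp] lemma lw_nil (w : V → V → R) : lw w [] = 1 := rfl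
@[simp] lemma lw_single (w : V → V → R) (a : V) : lw w [a] = 1 := rfl
@[simp] lemma lw_cons_cons (w : V → V → R) (a b : V) (l : List V) :
    lw w (a :: b :: l) = w a b * lw w (b :: l) := rfl

lemma lw_cons (w : V → V → R) (a : V) (l : List V) (hne : l ≠ []) :
    lw w (a :: l) = w a (l.head hne) * lw w l := by
  cases l with
  | nil => exact absurd rfl hne
  | cons b t => rfl

lemma lw_ofFn (w : V → V → R) : ∀ (m : ℕ) (f : Fin (m + 1) → V),
    lw w (List.ofFn f) = ∏ k : Fin m, w (f k.castSucc) (f k.succ)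
  | 0, f => by simp [List.ofFn_succ]
  | (m + 1), f => by
    have hne : (List.ofFn fun i : Fin (m + 1) => f i.succ) ≠ [] :=
      List.ne_nil_of_length_pos (by simp)
    rw [List.ofFn_succ, lw_cons w _ _ hne, lw_ofFn w m (fun i => f i.succ),
      Fin.prod_univ_succ]
    have hhead : (List.ofFn fun i : Fin (m + 1) => f i.succ).head hne = f 1 := by
      rw [List.head_eq_getElem, List.getElem_ofFn]
      congr 1
    rw [hhead]
    congr 1

lemma weight_eq_lw {s t : V} (w : V → V → R) (p : DiPath V E s t) :
    p.weight w = lw w (toL p) := by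
  rw [toL, lw_ofFn]
  rfl

/-- Key splitting identity for weights. -/
lemma lw_append_cons (w : V → V → R) (v : V) (ys : List V) : ∀ (xs : List V),
    lw w (xs ++ v :: ys) = lw w (xs ++ [v]) * lw w (v :: ys)
  | [] => by simp
  | [a] => by simp [mul_comm, mul_assoc, mul_left_comm]
  | (a :: b :: xs) => by
    have ih := lw_append_cons w v ys (b :: xs)
    simp only [List.cons_append, lw_cons_cons] at ih ⊢
    rw [ih]; ring

/-! ### Acyclicity: chains have no duplicates -/

lemma transGen_of_chain' {l : List V} (hc : l.Chain' E) :
    ∀ (j : ℕ) (hj : j < l.length) (i : ℕ) (hij : i < j),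
      Relation.TransGen E (l[i]'(by omega)) l[j] := by
  intro j
  induction j with
  | zero => omega
  | succ j ih =>
    intro hj i hij
    have hstep : E (l[j]'(by omega)) l[j+1] := by
      have := List.isChain_iff_getElem.1 hc j (by omega)
      simpa using this
    rcases Nat.lt_or_ge i j with h | h
    · exact (ih (by omega) i h).tail hstep
    · have : i = j := by omega
      subst this
      exact Relation.TransGen.single hstep

lemma nodup_of_chain' (hacyclic : ∀ v : V, ¬ Relation.TransGen E v v)
    {l : List V} (hc : l.Chain' E) : l.Nodup := by
  rw [List.Nodup, List.pairwise_iff_get]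
  intro i j hij
  intro heq
  have := transGen_of_chain' hc j.1 j.2 i.1 hij
  simp only [List.get_eq_getElem] at heq
  rw [heq] at this
  exact hacyclic _ this

lemma length_le_of_chain' (hacyclic : ∀ v : V, ¬ Relation.TransGen E v v)
    {l : List V} (hc : l.Chain' E) : l.length ≤ Fintype.card V + 1 :=
  le_trans (nodup_of_chain' hacyclic hc).length_le_card (by omega)

lemma nodup_toL (hacyclic : ∀ v : V, ¬ Relation.TransGen E v v) {s t : V}
    (p : DiPath V E s t) : (toL p).Nodup :=
  nodup_of_chain' hacyclic (chain'_toL p)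

end GVAux

namespace GVAux

set_option linter.unusedSectionVars false

open Finset List

variable {V : Type*} [Fintype V] [DecidableEq V] {E : V → V → Prop} [DecidableRel E]
variable {R : Type*} [CommRing R]

/-! ### The tail-swap operation on lists -/

def swapL (X Y : List V) (i t : ℕ) : List V := X.take (i + 1) ++ Y.drop (t + 1)

lemma swapL_def (X Y : List V) (i t : ℕ) :
    swapL X Y i t = X.take (i + 1) ++ Y.drop (t + 1) := rfl

section swapL

variable {X Y : List V} {i t : ℕ}

lemma mem_drop_iff {a : V} {n : ℕ} {l : List V} :
    a ∈ l.drop n ↔ ∃ m, ∃ h : m < l.length, n ≤ m ∧ l[m] = a := by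
  constructor
  · intro h
    rw [List.mem_iff_getElem] at h
    obtain ⟨k, hk, hak⟩ := h
    rw [List.getElem_drop] at hak
    have hkl := hk
    rw [List.length_drop] at hkl
    exact ⟨n + k, by omega, by omega, hak⟩
  · rintro ⟨m, hm, hnm, ham⟩
    rw [List.mem_iff_getElem]
    refine ⟨m - n, by rw [List.length_drop]; omega, ?_⟩
    rw [List.getElem_drop]
    convert ham using 2
    omega

lemma mem_take_iff {a : V} {n : ℕ} {l : List V} :
    a ∈ l.take n ↔ ∃ m, ∃ h : m < l.length, m < n ∧ l[m] = a := by
  constructor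
  · intro h
    rw [List.mem_iff_getElem] at h
    obtain ⟨k, hk, hak⟩ := h
    rw [List.getElem_take] at hak
    have hkl := hk
    rw [List.length_take] at hkl
    exact ⟨k, by omega, by omega, hak⟩
  · rintro ⟨m, hm, hnm, ham⟩
    rw [List.mem_iff_getElem]
    refine ⟨m, by rw [List.length_take]; omega, ?_⟩
    rw [List.getElem_take]
    exact ham

lemma getLast_take_succ {l : List V} {m : ℕ} (hm : m < l.length) (hne : l.take (m + 1) ≠ []) :
    (l.take (m + 1)).getLast hne = l[m] := by
  rw [List.getLast_eq_getElem]
  have hlt : (l.take (m + 1)).length = m + 1 := by rw [List.length_take]; omega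
  simp only [hlt, Nat.add_sub_cancel]
  rw [List.getElem_take]

variable (hiX : i < X.length) (htY : t < Y.length)

include hiX in
lemma take_decomp : X.take (i + 1) = X.take i ++ [X[i]] := by
  rw [← List.take_concat_get hiX, List.concat_eq_append]

include hiX in
lemma length_take_succ : (X.take (i + 1)).length = i + 1 := by
  rw [List.length_take]; omega

include hiX in
lemma swapL_length : (swapL X Y i t).length = (i + 1) + (Y.length - (t + 1)) := by
  rw [swapL_def, List.length_append, length_take_succ hiX, List.length_drop]

include hiX in
lemma swapL_ne_nil : swapL X Y i t ≠ [] := by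
  apply List.ne_nil_of_length_pos
  rw [swapL_length hiX]
  omega

include hiX in
lemma swapL_getElem_left {k : ℕ} (hk : k ≤ i)
    (h : k < (swapL X Y i t).length) :
    (swapL X Y i t)[k] = X[k]'(by omega) := by
  show (X.take (i + 1) ++ Y.drop (t + 1))[k]'(by rw [← swapL_def]; exact h) = _
  rw [List.getElem_append_left (by rw [length_take_succ hiX]; omega), List.getElem_take]

include hiX in
lemma swapL_head : (swapL X Y i t).head (swapL_ne_nil hiX) =
    X.head (List.ne_nil_of_length_pos (by omega)) := by
  rw [List.head_eq_getElem, List.head_eq_getElem]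
  exact swapL_getElem_left hiX (Nat.zero_le i) (by rw [swapL_length hiX]; omega)

include hiX htY in
include hiX htY in
lemma swapL_getLast (hv : X[i] = Y[t]) : (swapL X Y i t).getLast (swapL_ne_nil hiX) =
    Y.getLast (List.ne_nil_of_length_pos (by omega)) := by
  have h1 : (swapL X Y i t).getLast (swapL_ne_nil hiX)
      = (X.take (i + 1) ++ Y.drop (t + 1)).getLast
          (by rw [← swapL_def]; exact swapL_ne_nil hiX) := rfl
  rw [h1, List.getLast_append]
  split
  · next hemp =>
    have hdrop : Y.drop (t + 1) = [] := by simpa [List.isEmpty_iff] using hemp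
    have hlen : Y.length = t + 1 := by
      have := congrArg List.length hdrop
      rw [List.length_drop] at this
      simp at this
      omega
    rw [getLast_take_succ hiX _, List.getLast_eq_getElem, hv]
    congr 1
    omega
  · next hemp =>
    apply List.getLast_drop

include hiX htY in
lemma swapL_chain' (hv : X[i] = Y[t]) (hX : X.Chain' E) (hY : Y.Chain' E) :
    (swapL X Y i t).Chain' E := by
  show List.IsChain E (swapL X Y i t)
  rw [swapL_def, List.isChain_append]
  refine ⟨List.IsChain.take hX _, List.IsChain.drop hY _, ?_⟩
  intro x hx y hy
  rcases Nat.lt_or_ge (t + 1) Y.length with hlt | hge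
  · have hdne : Y.drop (t + 1) ≠ [] := List.ne_nil_of_length_pos (by rw [List.length_drop]; omega)
    have htne : X.take (i + 1) ≠ [] := List.ne_nil_of_length_pos (by rw [length_take_succ hiX]; omega)
    rw [List.getLast?_eq_getLast htne] at hx
    rw [List.head?_eq_head hdne] at hy
    have hx' : x = X[i] := by
      simp only [Option.mem_def, Option.some.injEq] at hx
      rw [← hx, getLast_take_succ hiX htne]
    have hy' : y = Y[t + 1] := by
      have : (Y.drop (t + 1)).head hdne = Y[t + 1] := by
        rw [List.head_eq_getElem, List.getElem_drop]
      simp only [Option.mem_def, Option.some.injEq] at hy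
      rw [← hy, this]
    subst hx' hy'
    rw [hv]
    have := List.isChain_iff_getElem.1 hY t (by omega)
    simpa using this
  · have hdrop : Y.drop (t + 1) = [] := by
      apply List.eq_nil_of_length_eq_zero
      rw [List.length_drop]; omega
    rw [hdrop] at hy
    simp at hy

include hiX htY in
lemma swapL_lw_mul (hv : X[i] = Y[t]) (w : V → V → R) :
    lw w (swapL X Y i t) * lw w (swapL Y X t i) = lw w X * lw w Y := by
  have dX : X = X.take i ++ X[i] :: X.drop (i + 1) := by
    conv_lhs => rw [← List.take_append_drop i X]
    rw [List.drop_eq_getElem_cons hiX]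
  have dY : Y = Y.take t ++ Y[t] :: Y.drop (t + 1) := by
    conv_lhs => rw [← List.take_append_drop t Y]
    rw [List.drop_eq_getElem_cons htY]
  have e1 : swapL X Y i t = X.take i ++ X[i] :: Y.drop (t + 1) := by
    rw [swapL_def, take_decomp hiX, List.append_assoc, List.singleton_append]
  have e2 : swapL Y X t i = Y.take t ++ Y[t] :: X.drop (i + 1) := by
    rw [swapL_def, take_decomp htY, List.append_assoc, List.singleton_append]
  rw [e1, e2, lw_append_cons w (X[i]'hiX) (Y.drop (t + 1)) (X.take i),
    lw_append_cons w (Y[t]'htY) (X.drop (i + 1)) (Y.take t)]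
  conv_rhs => rw [dX, dY]
  rw [lw_append_cons w (X[i]'hiX) (X.drop (i + 1)) (X.take i),
    lw_append_cons w (Y[t]'htY) (Y.drop (t + 1)) (Y.take t), hv]
  ring

include hiX in
lemma swapL_mem_iff (hv : X[i] = Y[t]) {a : V} :
    a ∈ swapL X Y i t ↔ a ∈ X.take (i + 1) ∨ a ∈ Y.drop (t + 1) := by
  rw [swapL_def, List.mem_append]

include hiX htY in
lemma swapL_swapL (hv : X[i] = Y[t]) :
    swapL (swapL X Y i t) (swapL Y X t i) i t = X := by
  rw [swapL_def (swapL X Y i t), swapL_def X, swapL_def Y]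
  rw [List.take_left' (length_take_succ hiX), List.drop_left' (length_take_succ htY),
    List.take_append_drop]

end swapL

end GVAux

namespace GVAux

noncomputable section

set_option linter.unusedSectionVars false
open scoped Classical
open Finset List

variable {V : Type*} [Fintype V] [DecidableEq V] {E : V → V → Prop} [DecidableRel E]
variable {n : ℕ} {A B : Fin n → V}

/-! ### Path systems -/

abbrev PS (V : Type*) [Fintype V] (E : V → V → Prop) {n : ℕ} (A B : Fin n → V) :=
  Σ σ : Equiv.Perm (Fin n), ∀ j, DiPath V E (A j) (B (σ j))

def LL (q : PS V E A B) (j : Fin n) : List V := toL (q.2 j)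

lemma LL_ne_nil (q : PS V E A B) (j : Fin n) : LL q j ≠ [] := toL_ne_nil _
lemma LL_length_pos (q : PS V E A B) (j : Fin n) : 0 < (LL q j).length :=
  List.length_pos_iff.2 (LL_ne_nil q j)
lemma head_LL (q : PS V E A B) (j : Fin n) : (LL q j).head (LL_ne_nil q j) = A j := head_toL _
lemma getLast_LL (q : PS V E A B) (j : Fin n) :
    (LL q j).getLast (LL_ne_nil q j) = B (q.1 j) := getLast_toL _
lemma chain'_LL (q : PS V E A B) (j : Fin n) : (LL q j).Chain' E := chain'_toL _

def Dis (q : PS V E A B) : Prop :=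
  ∀ j j' : Fin n, j ≠ j' → ∀ u v, (q.2 j).1.2 u ≠ (q.2 j').1.2 v

lemma not_dis_iff (q : PS V E A B) :
    ¬ Dis q ↔ ∃ j j' : Fin n, j ≠ j' ∧ ∃ x, x ∈ LL q j ∧ x ∈ LL q j' := by
  rw [Dis]
  push_neg
  constructor
  · rintro ⟨j, j', hne, u, v, huv⟩
    exact ⟨j, j', hne, (q.2 j).1.2 u, (mem_toL _ _).2 ⟨u, rfl⟩,
      (mem_toL _ _).2 ⟨v, huv.symm⟩⟩
  · rintro ⟨j, j', hne, x, hx, hx'⟩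
    obtain ⟨u, hu⟩ := (mem_toL _ _).1 hx
    obtain ⟨v, hv⟩ := (mem_toL _ _).1 hx'
    exact ⟨j, j', hne, u, v, by rw [hu, hv]⟩

lemma PS_ext (q q' : PS V E A B) (h1 : q.1 = q'.1) (h2 : ∀ j, LL q j = LL q' j) :
    q = q' := by
  obtain ⟨σ, P⟩ := q
  obtain ⟨σ', P'⟩ := q'
  simp only at h1
  subst h1
  have : P = P' := funext fun j => toL_injective (h2 j)
  rw [this]

/-! ### The crossing data -/

def Cross (q : PS V E A B) (j : Fin n) : Prop :=
  ∃ j', j' ≠ j ∧ ∃ x, x ∈ LL q j ∧ x ∈ LL q j'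

variable (q : PS V E A B) (h : ¬ Dis q)

include h

lemma cross_nonempty : (univ.filter (Cross q)).Nonempty := by
  obtain ⟨j, j', hne, x, hx, hx'⟩ := (not_dis_iff q).1 h
  exact ⟨j, Finset.mem_filter.2 ⟨Finset.mem_univ _, j', hne.symm, x, hx, hx'⟩⟩

def j0 : Fin n := (univ.filter (Cross q)).min' (cross_nonempty q h)

lemma j0_cross : Cross q (j0 q h) := by
  have := Finset.min'_mem (univ.filter (Cross q)) (cross_nonempty q h)
  exact (Finset.mem_filter.1 this).2

lemma j0_min {j : Fin n} (hj : Cross q j) : j0 q h ≤ j :=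
  Finset.min'_le _ _ (Finset.mem_filter.2 ⟨Finset.mem_univ _, hj⟩)

def QP (i : ℕ) : Prop :=
  ∃ hi : i < (LL q (j0 q h)).length,
    ∃ j', j' ≠ j0 q h ∧ (LL q (j0 q h))[i] ∈ LL q j'

lemma QP_exists : ∃ i, QP q h i := by
  obtain ⟨j', hne, x, hx, hx'⟩ := j0_cross q h
  obtain ⟨i, hi, hxi⟩ := List.mem_iff_getElem.1 hx
  exact ⟨i, hi, j', hne, by rw [hxi]; exact hx'⟩

def i0 : ℕ := Nat.find (QP_exists q h)

lemma i0_lt : i0 q h < (LL q (j0 q h)).length := by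
  obtain ⟨hi, -⟩ := Nat.find_spec (QP_exists q h)
  exact hi

def vv : V := (LL q (j0 q h))[i0 q h]'(i0_lt q h)

lemma vv_spec : ∃ j', j' ≠ j0 q h ∧ vv q h ∈ LL q j' := by
  obtain ⟨hi, j', hne, hmem⟩ := Nat.find_spec (QP_exists q h)
  exact ⟨j', hne, hmem⟩

lemma i0_min {i : ℕ} (hi : i < i0 q h) : ¬ QP q h i := Nat.find_min _ hi

lemma vv_mem_j0 : vv q h ∈ LL q (j0 q h) :=
  List.mem_iff_getElem.2 ⟨i0 q h, i0_lt q h, rfl⟩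

lemma j1_nonempty :
    (univ.filter fun j' => j' ≠ j0 q h ∧ vv q h ∈ LL q j').Nonempty := by
  obtain ⟨j', hne, hmem⟩ := vv_spec q h
  exact ⟨j', Finset.mem_filter.2 ⟨Finset.mem_univ _, hne, hmem⟩⟩

def j1 : Fin n :=
  (univ.filter fun j' => j' ≠ j0 q h ∧ vv q h ∈ LL q j').min' (j1_nonempty q h)

lemma j1_spec : j1 q h ≠ j0 q h ∧ vv q h ∈ LL q (j1 q h) := by
  have := Finset.min'_mem (univ.filter fun j' => j' ≠ j0 q h ∧ vv q h ∈ LL q j')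
    (j1_nonempty q h)
  exact (Finset.mem_filter.1 this).2

lemma j1_ne : j1 q h ≠ j0 q h := (j1_spec q h).1
lemma vv_mem_j1 : vv q h ∈ LL q (j1 q h) := (j1_spec q h).2

lemma j1_min {j' : Fin n} (h1 : j' ≠ j0 q h) (h2 : vv q h ∈ LL q j') : j1 q h ≤ j' :=
  Finset.min'_le _ _ (Finset.mem_filter.2 ⟨Finset.mem_univ _, h1, h2⟩)

def TP (t : ℕ) : Prop :=
  ∃ ht : t < (LL q (j1 q h)).length, (LL q (j1 q h))[t] = vv q h

lemma TP_exists : ∃ t, TP q h t := by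
  obtain ⟨t, ht, hxt⟩ := List.mem_iff_getElem.1 (vv_mem_j1 q h)
  exact ⟨t, ht, hxt⟩

def t0 : ℕ := Nat.find (TP_exists q h)

lemma t0_lt : t0 q h < (LL q (j1 q h)).length := by
  obtain ⟨ht, -⟩ := Nat.find_spec (TP_exists q h)
  exact ht

lemma t0_get : (LL q (j1 q h))[t0 q h]'(t0_lt q h) = vv q h := by
  obtain ⟨ht, hg⟩ := Nat.find_spec (TP_exists q h)
  exact hg

lemma t0_min {t : ℕ} (ht : t < t0 q h) : ¬ TP q h t := Nat.find_min _ ht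

lemma hv0 : (LL q (j0 q h))[i0 q h]'(i0_lt q h) = (LL q (j1 q h))[t0 q h]'(t0_lt q h) :=
  (t0_get q h).symm

/-! ### The flip -/

variable (hacyclic : ∀ v : V, ¬ Relation.TransGen E v v)

def newX : List V := swapL (LL q (j0 q h)) (LL q (j1 q h)) (i0 q h) (t0 q h)
def newY : List V := swapL (LL q (j1 q h)) (LL q (j0 q h)) (t0 q h) (i0 q h)

lemma newX_def : newX q h = swapL (LL q (j0 q h)) (LL q (j1 q h)) (i0 q h) (t0 q h) := rfl
lemma newY_def : newY q h = swapL (LL q (j1 q h)) (LL q (j0 q h)) (t0 q h) (i0 q h) := rfl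

lemma newX_chain' : (newX q h).Chain' E :=
  swapL_chain' (i0_lt q h) (t0_lt q h) (hv0 q h) (chain'_LL q _) (chain'_LL q _)

lemma newY_chain' : (newY q h).Chain' E :=
  swapL_chain' (t0_lt q h) (i0_lt q h) (hv0 q h).symm (chain'_LL q _) (chain'_LL q _)

include hacyclic in
lemma newX_len : (newX q h).length ≤ Fintype.card V + 1 :=
  length_le_of_chain' hacyclic (newX_chain' q h)

include hacyclic in
lemma newY_len : (newY q h).length ≤ Fintype.card V + 1 :=
  length_le_of_chain' hacyclic (newY_chain' q h)

def path0 : DiPath V E (A (j0 q h)) (B (q.1 (j1 q h))) :=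
  ofL (newX q h) (swapL_ne_nil (i0_lt q h)) (newX_len q h hacyclic)
    (by rw [← head_LL q (j0 q h)]; exact swapL_head (i0_lt q h))
    (by rw [← getLast_LL q (j1 q h)]; exact swapL_getLast (i0_lt q h) (t0_lt q h) (hv0 q h))
    (newX_chain' q h)

def path1 : DiPath V E (A (j1 q h)) (B (q.1 (j0 q h))) :=
  ofL (newY q h) (swapL_ne_nil (t0_lt q h)) (newY_len q h hacyclic)
    (by rw [← head_LL q (j1 q h)]; exact swapL_head (t0_lt q h))
    (by rw [← getLast_LL q (j0 q h)]; exact swapL_getLast (t0_lt q h) (i0_lt q h) (hv0 q h).symm)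
    (newY_chain' q h)

def flip : PS V E A B :=
  ⟨q.1 * Equiv.swap (j0 q h) (j1 q h), fun j =>
    if h0 : j = j0 q h then
      pcast (congrArg A h0.symm)
        (congrArg B (by subst h0; simp [Equiv.Perm.mul_apply, Equiv.swap_apply_left]))
        (path0 q h hacyclic)
    else if h1 : j = j1 q h then
      pcast (congrArg A h1.symm)
        (congrArg B (by subst h1; simp [Equiv.Perm.mul_apply, Equiv.swap_apply_right]))
        (path1 q h hacyclic)
    else
      pcast rfl
        (congrArg B (by simp [Equiv.Perm.mul_apply, Equiv.swap_apply_of_ne_of_ne h0 h1]))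
        (q.2 j)⟩

lemma flip_fst : (flip q h hacyclic).1 = q.1 * Equiv.swap (j0 q h) (j1 q h) := rfl

lemma LL_flip_j0 : LL (flip q h hacyclic) (j0 q h) = newX q h := by
  simp only [LL, flip, eq_self_iff_true, dite_true, toL_pcast]
  exact toL_ofL _ _ _ _ _ _

lemma LL_flip_j1 : LL (flip q h hacyclic) (j1 q h) = newY q h := by
  simp only [LL, flip, dif_neg (j1_ne q h), eq_self_iff_true, dite_true, toL_pcast]
  exact toL_ofL _ _ _ _ _ _

lemma LL_flip_other {j : Fin n} (h0 : j ≠ j0 q h) (h1 : j ≠ j1 q h) :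
    LL (flip q h hacyclic) j = LL q j := by
  simp only [LL, flip, dif_neg h0, dif_neg h1, toL_pcast]

end

end GVAux

namespace GVAux

noncomputable section

set_option linter.unusedSectionVars false
set_option maxHeartbeats 1000000
open scoped Classical
open Finset List

variable {V : Type*} [Fintype V] [DecidableEq V] {E : V → V → Prop} [DecidableRel E]
variable {n : ℕ} {A B : Fin n → V}
variable (q : PS V E A B) (h : ¬ Dis q)
variable (hacyclic : ∀ v : V, ¬ Relation.TransGen E v v)

include h

lemma newX_length : (newX q h).length = (i0 q h + 1) + ((LL q (j1 q h)).length - (t0 q h + 1)) :=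
  swapL_length (i0_lt q h)

lemma newY_length : (newY q h).length = (t0 q h + 1) + ((LL q (j0 q h)).length - (i0 q h + 1)) :=
  swapL_length (t0_lt q h)

lemma newX_getElem_le {k : ℕ} (hk : k ≤ i0 q h)
    (hb : k < (newX q h).length) :
    (newX q h)[k] = (LL q (j0 q h))[k]'(by have := i0_lt q h; omega) :=
  swapL_getElem_left (i0_lt q h) hk hb

lemma newY_getElem_le {k : ℕ} (hk : k ≤ t0 q h)
    (hb : k < (newY q h).length) :
    (newY q h)[k] = (LL q (j1 q h))[k]'(by have := t0_lt q h; omega) :=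
  swapL_getElem_left (t0_lt q h) hk hb

lemma vv_mem_newX : vv q h ∈ newX q h :=
  List.mem_iff_getElem.2 ⟨i0 q h, by rw [newX_length q h]; omega,
    newX_getElem_le q h le_rfl (by rw [newX_length q h]; omega)⟩

lemma vv_mem_newY : vv q h ∈ newY q h :=
  List.mem_iff_getElem.2 ⟨t0 q h, by rw [newY_length q h]; omega, by
    rw [newY_getElem_le q h le_rfl (by rw [newY_length q h]; omega)]
    exact t0_get q h⟩

lemma mem_pair_iff (x : V) :
    (x ∈ newX q h ∨ x ∈ newY q h) ↔ (x ∈ LL q (j0 q h) ∨ x ∈ LL q (j1 q h)) := by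
  have split0 : x ∈ LL q (j0 q h) →
      x ∈ (LL q (j0 q h)).take (i0 q h + 1) ∨ x ∈ (LL q (j0 q h)).drop (i0 q h + 1) :=
    fun hx => List.mem_append.1 (by rw [List.take_append_drop]; exact hx)
  have split1 : x ∈ LL q (j1 q h) →
      x ∈ (LL q (j1 q h)).take (t0 q h + 1) ∨ x ∈ (LL q (j1 q h)).drop (t0 q h + 1) :=
    fun hx => List.mem_append.1 (by rw [List.take_append_drop]; exact hx)
  rw [newX_def, newY_def, swapL_def, swapL_def, List.mem_append, List.mem_append]
  constructor
  · rintro ((hx | hx) | (hx | hx))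
    · exact Or.inl (List.mem_of_mem_take hx)
    · exact Or.inr (List.mem_of_mem_drop hx)
    · exact Or.inr (List.mem_of_mem_take hx)
    · exact Or.inl (List.mem_of_mem_drop hx)
  · rintro (hx | hx)
    · rcases split0 hx with hm | hm
      · exact Or.inl (Or.inl hm)
      · exact Or.inr (Or.inr hm)
    · rcases split1 hx with hm | hm
      · exact Or.inr (Or.inl hm)
      · exact Or.inl (Or.inr hm)

include hacyclic

lemma flip_not_dis : ¬ Dis (flip q h hacyclic) := by
  rw [not_dis_iff]
  refine ⟨j0 q h, j1 q h, (j1_ne q h).symm, vv q h, ?_, ?_⟩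
  · rw [LL_flip_j0]; exact vv_mem_newX q h
  · rw [LL_flip_j1]; exact vv_mem_newY q h

lemma cross_flip (j : Fin n) : Cross (flip q h hacyclic) j ↔ Cross q j := by
  by_cases hj0 : j = j0 q h
  · subst hj0
    apply iff_of_true
    · exact ⟨j1 q h, j1_ne q h, vv q h,
        by rw [LL_flip_j0]; exact vv_mem_newX q h,
        by rw [LL_flip_j1]; exact vv_mem_newY q h⟩
    · exact j0_cross q h
  by_cases hj1 : j = j1 q h
  · subst hj1
    apply iff_of_true
    · exact ⟨j0 q h, (j1_ne q h).symm, vv q h,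
        by rw [LL_flip_j1]; exact vv_mem_newY q h,
        by rw [LL_flip_j0]; exact vv_mem_newX q h⟩
    · exact ⟨j0 q h, (j1_ne q h).symm, vv q h, vv_mem_j1 q h, vv_mem_j0 q h⟩
  have hLj : LL (flip q h hacyclic) j = LL q j := LL_flip_other q h hacyclic hj0 hj1
  constructor
  · rintro ⟨j', hne, x, hxj, hxj'⟩
    rw [hLj] at hxj
    by_cases h0 : j' = j0 q h
    · subst h0
      rw [LL_flip_j0] at hxj'
      rcases (mem_pair_iff q h x).1 (Or.inl hxj') with hc | hc
      · exact ⟨j0 q h, fun hh => hj0 hh.symm, x, hxj, hc⟩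
      · exact ⟨j1 q h, fun hh => hj1 hh.symm, x, hxj, hc⟩
    by_cases h1 : j' = j1 q h
    · subst h1
      rw [LL_flip_j1] at hxj'
      rcases (mem_pair_iff q h x).1 (Or.inr hxj') with hc | hc
      · exact ⟨j0 q h, fun hh => hj0 hh.symm, x, hxj, hc⟩
      · exact ⟨j1 q h, fun hh => hj1 hh.symm, x, hxj, hc⟩
    · rw [LL_flip_other q h hacyclic h0 h1] at hxj'
      exact ⟨j', hne, x, hxj, hxj'⟩
  · rintro ⟨j', hne, x, hxj, hxj'⟩
    rw [← hLj] at hxj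
    by_cases h0 : j' = j0 q h
    · subst h0
      rcases (mem_pair_iff q h x).2 (Or.inl hxj') with hc | hc
      · exact ⟨j0 q h, fun hh => hj0 hh.symm, x, hxj, by rw [LL_flip_j0]; exact hc⟩
      · exact ⟨j1 q h, fun hh => hj1 hh.symm, x, hxj, by rw [LL_flip_j1]; exact hc⟩
    by_cases h1 : j' = j1 q h
    · subst h1
      rcases (mem_pair_iff q h x).2 (Or.inr hxj') with hc | hc
      · exact ⟨j0 q h, fun hh => hj0 hh.symm, x, hxj, by rw [LL_flip_j0]; exact hc⟩
      · exact ⟨j1 q h, fun hh => hj1 hh.symm, x, hxj, by rw [LL_flip_j1]; exact hc⟩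
    · exact ⟨j', hne, x, hxj, by rw [LL_flip_other q h hacyclic h0 h1]; exact hxj'⟩

lemma j0_flip (hf : ¬ Dis (flip q h hacyclic)) :
    j0 (flip q h hacyclic) hf = j0 q h := by
  apply _root_.le_antisymm
  · exact j0_min _ hf ((cross_flip q h hacyclic _).2 (j0_cross q h))
  · exact j0_min q h ((cross_flip q h hacyclic _).1 (j0_cross _ hf))

lemma i0_flip (hf : ¬ Dis (flip q h hacyclic)) :
    i0 (flip q h hacyclic) hf = i0 q h := by
  show Nat.find (QP_exists _ hf) = i0 q h
  rw [Nat.find_eq_iff]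
  constructor
  · show QP _ hf (i0 q h)
    simp only [QP, j0_flip q h hacyclic hf, LL_flip_j0]
    refine ⟨by rw [newX_length q h]; omega, j1 q h, j1_ne q h, ?_⟩
    rw [newX_getElem_le q h le_rfl (by rw [newX_length q h]; omega), LL_flip_j1]
    exact vv_mem_newY q h
  · intro i hi
    show ¬ QP _ hf i
    simp only [QP, j0_flip q h hacyclic hf, LL_flip_j0]
    rintro ⟨hilen, j', hne, hmem⟩
    have hxi : (newX q h)[i]'hilen = (LL q (j0 q h))[i]'(by have := i0_lt q h; omega) :=
      newX_getElem_le q h (by omega) hilen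
    by_cases h1 : j' = j1 q h
    · subst h1
      rw [LL_flip_j1] at hmem
      rw [newY_def, swapL_def, List.mem_append] at hmem
      rcases hmem with hm | hm
      · exact i0_min q h hi ⟨by have := i0_lt q h; omega, j1 q h, j1_ne q h,
          by rw [← hxi]; exact List.mem_of_mem_take hm⟩
      · rw [hxi] at hm
        obtain ⟨m, hmlt, hge, hmeq⟩ := mem_drop_iff.1 hm
        have hnd : (LL q (j0 q h)).Nodup := nodup_of_chain' hacyclic (chain'_LL q _)
        have := (hnd.getElem_inj_iff).1 hmeq
        omega
    · rw [LL_flip_other q h hacyclic hne h1] at hmem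
      exact i0_min q h hi ⟨by have := i0_lt q h; omega, j', hne,
        by rw [← hxi]; exact hmem⟩

lemma vv_flip (hf : ¬ Dis (flip q h hacyclic)) :
    vv (flip q h hacyclic) hf = vv q h := by
  simp only [vv, j0_flip q h hacyclic hf, LL_flip_j0, i0_flip q h hacyclic hf]
  exact newX_getElem_le q h le_rfl (by rw [newX_length q h]; omega)

lemma j1_flip (hf : ¬ Dis (flip q h hacyclic)) :
    j1 (flip q h hacyclic) hf = j1 q h := by
  apply _root_.le_antisymm
  · apply j1_min
    · rw [j0_flip q h hacyclic hf]; exact j1_ne q h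
    · rw [vv_flip q h hacyclic hf, LL_flip_j1]; exact vv_mem_newY q h
  · by_cases heq : j1 (flip q h hacyclic) hf = j1 q h
    · rw [heq]
    · apply j1_min q h
      · have := j1_ne _ hf
        rwa [j0_flip q h hacyclic hf] at this
      · have hm := vv_mem_j1 _ hf
        rw [vv_flip q h hacyclic hf] at hm
        rwa [LL_flip_other q h hacyclic
          (by have := j1_ne _ hf; rwa [j0_flip q h hacyclic hf] at this) heq] at hm

lemma t0_flip (hf : ¬ Dis (flip q h hacyclic)) :
    t0 (flip q h hacyclic) hf = t0 q h := by
  show Nat.find (TP_exists _ hf) = t0 q h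
  rw [Nat.find_eq_iff]
  constructor
  · show TP _ hf (t0 q h)
    simp only [TP, j1_flip q h hacyclic hf, LL_flip_j1, vv_flip q h hacyclic hf]
    refine ⟨by rw [newY_length q h]; omega, ?_⟩
    rw [newY_getElem_le q h le_rfl (by rw [newY_length q h]; omega)]
    exact t0_get q h
  · intro t ht
    show ¬ TP _ hf t
    simp only [TP, j1_flip q h hacyclic hf, LL_flip_j1, vv_flip q h hacyclic hf]
    rintro ⟨htlen, hteq⟩
    rw [newY_getElem_le q h (by omega) htlen] at hteq
    exact t0_min q h ht ⟨by have := t0_lt q h; omega, hteq⟩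

lemma flip_flip (hf : ¬ Dis (flip q h hacyclic)) :
    flip (flip q h hacyclic) hf hacyclic = q := by
  apply PS_ext
  · rw [flip_fst, flip_fst, j0_flip q h hacyclic hf, j1_flip q h hacyclic hf,
      mul_assoc, Equiv.swap_mul_self, mul_one]
  · intro j
    by_cases hj0 : j = j0 q h
    · subst hj0
      have e1 : LL (flip (flip q h hacyclic) hf hacyclic) (j0 q h)
          = newX (flip q h hacyclic) hf := by
        rw [← j0_flip q h hacyclic hf, LL_flip_j0]
      rw [e1, newX_def, j0_flip q h hacyclic hf, j1_flip q h hacyclic hf,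
        i0_flip q h hacyclic hf, t0_flip q h hacyclic hf, LL_flip_j0, LL_flip_j1,
        newX_def, newY_def]
      exact swapL_swapL (i0_lt q h) (t0_lt q h) (hv0 q h)
    by_cases hj1 : j = j1 q h
    · subst hj1
      have e1 : LL (flip (flip q h hacyclic) hf hacyclic) (j1 q h)
          = newY (flip q h hacyclic) hf := by
        rw [← j1_flip q h hacyclic hf, LL_flip_j1]
      rw [e1, newY_def, j0_flip q h hacyclic hf, j1_flip q h hacyclic hf,
        i0_flip q h hacyclic hf, t0_flip q h hacyclic hf, LL_flip_j0, LL_flip_j1,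
        newX_def, newY_def]
      exact swapL_swapL (t0_lt q h) (i0_lt q h) (hv0 q h).symm
    · rw [LL_flip_other _ hf hacyclic
        (by rw [j0_flip q h hacyclic hf]; exact hj0)
        (by rw [j1_flip q h hacyclic hf]; exact hj1),
        LL_flip_other q h hacyclic hj0 hj1]

lemma flip_ne : flip q h hacyclic ≠ q := by
  intro he
  have h1 : q.1 * Equiv.swap (j0 q h) (j1 q h) = q.1 := congrArg Sigma.fst he
  have h2 := mul_eq_left.1 h1
  rw [Equiv.swap_eq_one_iff] at h2
  exact (j1_ne q h).symm h2

end

end GVAux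

namespace GVAux

noncomputable section

set_option linter.unusedSectionVars false
set_option maxHeartbeats 1000000
open scoped Classical
open Finset List Matrix

variable {V : Type*} [Fintype V] [DecidableEq V] {E : V → V → Prop} [DecidableRel E]
variable {n : ℕ} {A B : Fin n → V}
variable {R : Type*} [CommRing R] (w : V → V → R)

def FF (q : PS V E A B) : R :=
  ((Equiv.Perm.sign q.1 : ℤ) : R) * ∏ j, (q.2 j).weight w

lemma FF_flip (q : PS V E A B) (h : ¬ Dis q)
    (hacyclic : ∀ v : V, ¬ Relation.TransGen E v v) :
    FF w (flip q h hacyclic) = - FF w q := by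
  have hsign : Equiv.Perm.sign (flip q h hacyclic).1 = - Equiv.Perm.sign q.1 := by
    rw [flip_fst, _root_.map_mul, Equiv.Perm.sign_swap (Ne.symm (j1_ne q h)), mul_neg_one]
  have hprod : ∏ j, ((flip q h hacyclic).2 j).weight w = ∏ j, (q.2 j).weight w := by
    have hw : ∀ (q' : PS V E A B) (j : Fin n), (q'.2 j).weight w = lw w (LL q' j) :=
      fun q' j => weight_eq_lw w (q'.2 j)
    simp only [hw]
    have hb : j1 q h ∈ univ.erase (j0 q h) :=
      Finset.mem_erase.2 ⟨j1_ne q h, Finset.mem_univ _⟩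
    rw [← Finset.mul_prod_erase univ _ (Finset.mem_univ (j0 q h)),
      ← Finset.mul_prod_erase _ _ hb]
    conv_rhs => rw [← Finset.mul_prod_erase univ _ (Finset.mem_univ (j0 q h)),
      ← Finset.mul_prod_erase _ _ hb]
    have htail : ∏ j ∈ (univ.erase (j0 q h)).erase (j1 q h), lw w (LL (flip q h hacyclic) j)
        = ∏ j ∈ (univ.erase (j0 q h)).erase (j1 q h), lw w (LL q j) := by
      apply Finset.prod_congr rfl
      intro j hj
      have h1 := Finset.mem_erase.1 hj
      have h2 := Finset.mem_erase.1 h1.2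
      rw [LL_flip_other q h hacyclic h2.1 h1.1]
    rw [htail, LL_flip_j0, LL_flip_j1, ← mul_assoc, ← mul_assoc, newX_def, newY_def,
      swapL_lw_mul (i0_lt q h) (t0_lt q h) (hv0 q h) w]
  rw [FF, FF, hsign, hprod]
  push_cast
  ring

variable (E A B)

lemma det_eq_sum_PS (hacyclic : ∀ v : V, ¬ Relation.TransGen E v v) :
    (Matrix.of fun j k : Fin n =>
        ∑ p : DiPath V E (A j) (B k), p.weight w).det = ∑ q : PS V E A B, FF w q := by
  rw [← Matrix.det_transpose, Matrix.det_apply']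
  have hentry : ∀ σ : Equiv.Perm (Fin n),
      ∏ i, (Matrix.of fun j k : Fin n => ∑ p : DiPath V E (A j) (B k), p.weight w)ᵀ (σ i) i
        = ∑ f ∈ Fintype.piFinset (fun j => (univ : Finset (DiPath V E (A j) (B (σ j))))),
            ∏ j, (f j).weight w := by
    intro σ
    rw [← Finset.prod_univ_sum]
    rfl
  calc ∑ σ : Equiv.Perm (Fin n), ((Equiv.Perm.sign σ : ℤ) : R) *
        ∏ i, (Matrix.of fun j k : Fin n => ∑ p : DiPath V E (A j) (B k), p.weight w)ᵀ (σ i) i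
      = ∑ σ : Equiv.Perm (Fin n), ∑ f : ∀ j, DiPath V E (A j) (B (σ j)),
          ((Equiv.Perm.sign σ : ℤ) : R) * ∏ j, (f j).weight w := by
        apply Finset.sum_congr rfl
        intro σ _
        rw [hentry σ, Finset.mul_sum, Fintype.piFinset_univ]
    _ = ∑ q : PS V E A B, FF w q := by
        conv_rhs => rw [← Finset.univ_sigma_univ (ι := Equiv.Perm (Fin n))
          (κ := fun σ => ∀ j, DiPath V E (A j) (B (σ j))), Finset.sum_sigma]
        rfl

lemma sum_not_dis_zero (hacyclic : ∀ v : V, ¬ Relation.TransGen E v v) :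
    ∑ q ∈ univ.filter (fun q : PS V E A B => ¬ Dis q), FF w q = 0 := by
  apply Finset.sum_involution
    (g := fun q hq => flip q (by simpa using (Finset.mem_filter.1 hq).2) hacyclic)
  · intro q hq
    rw [FF_flip]
    ring
  · intro q hq _
    exact flip_ne q _ hacyclic
  · intro q hq
    exact flip_flip q _ hacyclic _
  · intro q hq
    exact Finset.mem_filter.2 ⟨Finset.mem_univ _, flip_not_dis q _ hacyclic⟩

end

end GVAux


open Finset in
/-- **Gessel–Viennot–Lindström Lemma.**  In a finite acyclic weighted digraph
with initial vertices `A 0, …, A (n-1)` and final vertices `B 0, …, B (n-1)`,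
the determinant of the path matrix `M` — where `M j k` is the sum of the
weights of all directed paths from `A j` to `B k` — equals the sum over all
vertex-disjoint path systems `P` of `sgn(P) * w(P)`. -/
theorem gessel_viennot_lindstrom {V : Type*} [Fintype V] [DecidableEq V]
    (E : V → V → Prop) [DecidableRel E]
    (hacyclic : ∀ v : V, ¬ Relation.TransGen E v v)
    {R : Type*} [CommRing R] (w : V → V → R) {n : ℕ} (A B : Fin n → V) :
    (Matrix.of fun j k : Fin n =>
        ∑ p : DiPath V E (A j) (B k), p.weight w).det =
      ∑ q : VDPathSystem V E A B,
        ((Equiv.Perm.sign q.1.1 : ℤ) : R) * ∏ j, (q.1.2 j).weight w := by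
  classical
  rw [GVAux.det_eq_sum_PS E A B w hacyclic]
  rw [← Finset.sum_filter_add_sum_filter_not univ (fun q => GVAux.Dis q) (GVAux.FF w)]
  rw [GVAux.sum_not_dis_zero E A B w hacyclic, add_zero]
  rw [Finset.sum_subtype (p := fun q : GVAux.PS V E A B =>
    ∀ j j' : Fin n, j ≠ j' → ∀ u v, (q.2 j).1.2 u ≠ (q.2 j').1.2 v)
    _ (fun q => by rw [Finset.mem_filter]; simp [GVAux.Dis])]
  rfl
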